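/- Let D = (Σ, Const) be a successor-only declarative process and define CoreOcc(D) := { K ∈ Σ/≲occ : ⪯_K is antisymmetric }, where Σ/≲occ is the set of ≲occ-equivalence classes. Then PossIm(D) is exactly the set of all unions of elements of CoreOcc(D); that is, I ∈ PossIm(D) if and only if I = K₁ ∪ ⋯ ∪ K_m for some (possibly empty) collection {K₁, …, K_m} ⊆ CoreOcc(D). -/

import Mathlib

/-- The implied-occurrence relation `≲occ` of a successor-only process. -/
def occS {α : Type*} (Succ : α → α → Prop) : α → α → Prop :=
  Relation.ReflTransGen (fun a b => Succ a b ∨ Succ b a)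

/-- The restriction `r|_I := r ∩ (I × I)` of a relation to a set. -/
def restrictRel {α : Type*} (r : α → α → Prop) (I : Set α) : α → α → Prop :=
  fun a b => a ∈ I ∧ b ∈ I ∧ r a b

/-- `⪯_I` for the successor-only case (`→ord = Succ`). -/
def preS {α : Type*} (Succ : α → α → Prop) (I : Set α) : α → α → Prop :=
  Relation.ReflTransGen (restrictRel Succ I)

/-- A (first-passage) trace of a successor-only declarative process: for every
`Succ(a,b) ∈ Const`, `a` occurs iff `b` occurs, and when both occur, `a`
appears before `b`. -/
def IsTraceS {α : Type*} (Succ : α → α → Prop) (τ : List α) : Prop :=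
  τ.Nodup ∧ ∀ a b, Succ a b → ((a ∈ τ ↔ b ∈ τ) ∧ (a ∈ τ → [a, b].Sublist τ))

/-- The image (set of terms) of the sequence `τ`. -/
def imList {α : Type*} (τ : List α) : Set α := {x | x ∈ τ}

/-- `CoreOcc(D)`: the `≲occ`-equivalence classes `K` for which `⪯_K` is
antisymmetric. -/
def CoreOcc {α : Type*} (Succ : α → α → Prop) : Set (Set α) :=
  {K | (∃ a : α, K = {b | occS Succ a b}) ∧
    ∀ x y, preS Succ K x y → preS Succ K y x → x = y}

/- ### Auxiliary lemmas -/

lemma occS_symm {α : Type*} {Succ : α → α → Prop} {a b : α}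
    (h : occS Succ a b) : occS Succ b a := by
  have hsym : Symmetric (fun a b => Succ a b ∨ Succ b a) := fun x y h => h.symm
  haveI : Std.Symm (fun a b => Succ a b ∨ Succ b a) := ⟨hsym⟩
  exact (Relation.ReflTransGen.stdSymm (r := fun a b => Succ a b ∨ Succ b a)).symm _ _ h

lemma occS_trans {α : Type*} {Succ : α → α → Prop} {a b c : α}
    (h : occS Succ a b) (h' : occS Succ b c) : occS Succ a c :=
  Relation.ReflTransGen.trans h h'

/-- `preS` implies `occS`. -/
lemma preS_occS {α : Type*} {Succ : α → α → Prop} {K : Set α} {x y : α}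
    (h : preS Succ K x y) : occS Succ x y :=
  Relation.ReflTransGen.mono (r := restrictRel Succ K) (p := fun a b => Succ a b ∨ Succ b a)
    (fun _ _ hr => Or.inl hr.2.2) _ _ h

/-- A `preS`-path from `x` stays inside the occS-class of `x`. -/
lemma preS_class {α : Type*} {Succ : α → α → Prop} {K : Set α} {x y : α}
    (h : preS Succ K x y) : preS Succ {b | occS Succ x b} x y := by
  induction h with
  | refl => exact Relation.ReflTransGen.refl
  | tail _ hbc ih =>
      have hxb : occS Succ x _ := preS_occS ih
      exact ih.tail ⟨hxb, occS_trans hxb (Relation.ReflTransGen.single (Or.inl hbc.2.2)),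
        hbc.2.2⟩

/-- membership in a trace is invariant along `occS`. -/
lemma occS_mem_trace {α : Type*} {Succ : α → α → Prop} {τ : List α}
    (hτ : IsTraceS Succ τ) {a b : α} (h : occS Succ a b) : a ∈ τ ↔ b ∈ τ := by
  induction h with
  | refl => exact Iff.rfl
  | tail _ hbc ih =>
      refine ih.trans ?_
      rcases hbc with h1 | h1
      · exact (hτ.2 _ _ h1).1
      · exact ((hτ.2 _ _ h1).1).symm

lemma indexOf_lt_of_sublist {α : Type*} [DecidableEq α] {a b : α} :
    ∀ {τ : List α}, [a, b].Sublist τ → τ.Nodup → τ.idxOf a < τ.idxOf b := by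
  intro τ hsub hnd
  induction τ with
  | nil => simp at hsub
  | cons c t ih =>
      rcases hsub with _ | _ | _
      case cons hsub' =>
        have ha : a ∈ t := hsub'.subset (by simp)
        have hb : b ∈ t := hsub'.subset (by simp)
        have hca : c ≠ a := fun h => (List.nodup_cons.1 hnd).1 (h ▸ ha)
        have hcb : c ≠ b := fun h => (List.nodup_cons.1 hnd).1 (h ▸ hb)
        rw [List.idxOf_cons_ne _ hca, List.idxOf_cons_ne _ hcb]
        exact Nat.succ_lt_succ (ih hsub' (List.nodup_cons.1 hnd).2)
      case cons_cons hsub' =>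
        have hb : b ∈ t := hsub'.subset (by simp)
        have hcb : a ≠ b := fun h => (List.nodup_cons.1 hnd).1 (h ▸ hb)
        rw [List.idxOf_cons_self, List.idxOf_cons_ne _ hcb]
        exact Nat.succ_pos _

lemma indexOf_le_of_preS {α : Type*} [DecidableEq α] {Succ : α → α → Prop}
    {τ : List α} (hτ : IsTraceS Succ τ) {K : Set α} (hK : K ⊆ imList τ)
    {x y : α} (h : preS Succ K x y) : τ.idxOf x ≤ τ.idxOf y := by
  induction h with
  | refl => exact le_rfl
  | tail _ hbc ih =>
      refine le_trans ih (le_of_lt ?_)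
      exact indexOf_lt_of_sublist ((hτ.2 _ _ hbc.2.2).2 (hK hbc.1)) hτ.1

/-- In a sorted nodup list, `a` strictly before `b` yields the sublist `[a,b]`. -/
lemma sublist_pair_of_sorted {α : Type*} {s : α → α → Prop} [IsAntisymm α s] {a b : α} :
    ∀ {l : List α}, List.Pairwise s l → a ∈ l → b ∈ l → s a b → a ≠ b →
      [a, b].Sublist l := by
  intro l hsort ha hb hab hne
  induction l with
  | nil => simp at ha
  | cons c t ih =>
      rcases List.mem_cons.1 ha with rfl | ha'
      · have hb' : b ∈ t := by
          rcases List.mem_cons.1 hb with rfl | h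
          · exact absurd rfl hne
          · exact h
        exact (List.singleton_sublist.2 hb').cons₂ a
      · have hb' : b ∈ t := by
          rcases List.mem_cons.1 hb with rfl | h
          · have hca : s b a := (List.pairwise_cons.1 hsort).1 a ha'
            exact absurd (antisymm hab hca) hne
          · exact h
        exact ((ih (List.pairwise_cons.1 hsort).2 ha' hb')).cons c

theorem succ_only_possIm_eq_unions_of_core {α : Type*} [Fintype α]
    (Succ : α → α → Prop) (hS : ∀ a b, Succ a b → a ≠ b)
    (I : Set α) :
    (∃ τ : List α, IsTraceS Succ τ ∧ imList τ = I) ↔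
      ∃ S ⊆ CoreOcc Succ, I = ⋃₀ S := by
  classical
  constructor
  · rintro ⟨τ, hτ, rfl⟩
    refine ⟨{K | ∃ a ∈ imList τ, K = {b | occS Succ a b}}, ?_, ?_⟩
    · rintro K ⟨a, ha, rfl⟩
      refine ⟨⟨a, rfl⟩, ?_⟩
      have hKτ : {b | occS Succ a b} ⊆ imList τ := fun b hb =>
        (occS_mem_trace hτ hb).1 ha
      intro x y hxy hyx
      have h1 := indexOf_le_of_preS hτ hKτ hxy
      have h2 := indexOf_le_of_preS hτ hKτ hyx
      rcases Relation.ReflTransGen.cases_head hxy with rfl | ⟨b, hb, _⟩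
      · rfl
      rcases Relation.ReflTransGen.cases_head hyx with heq | ⟨c, hc, _⟩
      · exact heq.symm
      exact (List.idxOf_inj (hKτ hb.1)).1 (le_antisymm h1 h2)
    · ext x
      constructor
      · intro hx
        exact ⟨{b | occS Succ x b}, ⟨x, hx, rfl⟩, Relation.ReflTransGen.refl⟩
      · rintro ⟨K, ⟨a, ha, rfl⟩, hx⟩
        exact (occS_mem_trace hτ hx).1 ha
  · rintro ⟨S, hSsub, rfl⟩
    set I := ⋃₀ S with hI
    -- `preS Succ I` is a partial order on all of α
    have hanti : ∀ x y, preS Succ I x y → preS Succ I y x → x = y := by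
      intro x y hxy hyx
      rcases Relation.ReflTransGen.cases_head hxy with rfl | ⟨b, hb, _⟩
      · rfl
      -- x ∈ I, so x lies in some class K ∈ S
      obtain ⟨K, hKS, hxK⟩ := hb.1
      obtain ⟨⟨a, rfl⟩, hKanti⟩ := hSsub hKS
      -- class of x equals K
      have hclass : {b | occS Succ x b} = {b | occS Succ a b} := by
        ext c
        exact ⟨fun h => occS_trans hxK h, fun h => occS_trans (occS_symm hxK) h⟩
      have hxy' : preS Succ {b | occS Succ a b} x y := hclass ▸ preS_class hxy
      have hclassy : {b | occS Succ y b} = {b | occS Succ a b} := by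
        have hxy'' : occS Succ x y := preS_occS hxy
        ext c
        exact ⟨fun h => occS_trans hxK (occS_trans hxy'' h),
          fun h => occS_trans (occS_symm hxy'') (occS_trans (occS_symm hxK) h)⟩
      have hyx' : preS Succ {b | occS Succ a b} y x := hclassy ▸ preS_class hyx
      exact hKanti x y hxy' hyx'
    haveI : IsPartialOrder α (preS Succ I) :=
      { refl := fun _ => Relation.ReflTransGen.refl
        trans := fun _ _ _ h h' => Relation.ReflTransGen.trans h h'
        antisymm := hanti }
    obtain ⟨s, hs, hle⟩ := extend_partialOrder (preS Succ I)
    haveI : IsLinearOrder α s := hs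
    haveI : DecidableRel s := fun a b => Classical.dec _
    set τ : List α := Finset.sort (Set.toFinite I).toFinset s with hτdef
    have hmem : ∀ x, x ∈ τ ↔ x ∈ I := by
      intro x; rw [hτdef, Finset.mem_sort, Set.Finite.mem_toFinset]
    -- I is closed under single Succ-steps in either direction
    have hclosed : ∀ a b, (Succ a b ∨ Succ b a) → (a ∈ I ↔ b ∈ I) := by
      intro a b hab
      constructor
      · rintro ⟨K, hKS, haK⟩
        obtain ⟨⟨c, rfl⟩, -⟩ := hSsub hKS
        exact ⟨_, hKS, occS_trans haK (Relation.ReflTransGen.single hab)⟩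
      · rintro ⟨K, hKS, hbK⟩
        obtain ⟨⟨c, rfl⟩, -⟩ := hSsub hKS
        exact ⟨_, hKS, occS_trans hbK (Relation.ReflTransGen.single hab.symm)⟩
    refine ⟨τ, ⟨Finset.sort_nodup _ _, ?_⟩, ?_⟩
    · intro a b hab
      have hiff : a ∈ τ ↔ b ∈ τ := by
        rw [hmem, hmem]; exact hclosed a b (Or.inl hab)
      refine ⟨hiff, fun haτ => ?_⟩
      have haI : a ∈ I := (hmem a).1 haτ
      have hbI : b ∈ I := (hclosed a b (Or.inl hab)).1 haI
      have hsab : s a b := hle _ _ (Relation.ReflTransGen.single ⟨haI, hbI, hab⟩)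
      exact sublist_pair_of_sorted (Finset.pairwise_sort _ _) haτ ((hmem b).2 hbI)
        hsab (hS a b hab)
    · ext x; exact (hmem x)
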